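/- Let d ≥ 1 and let β : [0,1] → ℝ^d be a continuous path with 0 < L(β) < ∞. For J ≥ 1 let L_{τ_J}(β) = Σ_{j=1}^J |β(j/J) − β((j−1)/J)|₂ be the chordal length of β along the uniform partition of mesh 1/J and, whenever L_{τ_J}(β) > 0 (which holds for all sufficiently large J), let U_J be a random variable whose law is the mixture Σ_{j=1}^J (|β(j/J) − β((j−1)/J)|₂ / L_{τ_J}(β)) · Unif[(j−1)/J, j/J] of uniform distributions. Then β(U_J) converges in distribution, as J → ∞, to the arc-length measure of β; that is, for every bounded continuous f : ℝ^d → ℝ, E[f(β(U_J))] → ∫₀¹ f(β(q_β(t))) dt. (Lemma S2.4 of the paper.) -/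

import Mathlib

open MeasureTheory Set Filter
open scoped ENNReal unitInterval BoundedContinuousFunction

noncomputable section

abbrev Euc (d : ℕ) := EuclideanSpace ℝ (Fin d)

/-- Projection of `ℝ` onto `[0,1]`. -/
def pr (x : ℝ) : unitInterval := Set.projIcc 0 1 zero_le_one x

/-- The length (total variation on `[0,1]`) of a continuous path. -/
def curveLength {d : ℕ} (β : C(unitInterval, Euc d)) : ℝ≥0∞ :=
  eVariationOn β Set.univ

/-- The length of `β` restricted to `[0,t]`. -/
def lengthTo {d : ℕ} (β : C(unitInterval, Euc d)) (t : unitInterval) : ℝ≥0∞ :=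
  eVariationOn β (Set.Icc 0 t)

/-- The normalized arc-length function `s_β(t) = L(β|_{[0,t]})/L(β)`. -/
def sFrac {d : ℕ} (β : C(unitInterval, Euc d)) (t : unitInterval) : ℝ≥0∞ :=
  lengthTo β t / curveLength β

/-- The generalized inverse `q_β(u) = inf {t : s_β(t) ≥ u}`, as a point of `[0,1]`. -/
def qPoint {d : ℕ} (β : C(unitInterval, Euc d)) (u : ℝ) : unitInterval :=
  pr (sInf {x : ℝ | ∃ t : unitInterval, (t : ℝ) = x ∧ ENNReal.ofReal u ≤ sFrac β t})

/-- The chordal length `L_{τ_J}(β)` of `β` along the uniform partition of mesh `1/J`. -/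
def chordal {d : ℕ} (β : C(unitInterval, Euc d)) (J : ℕ) : ℝ :=
  ∑ j ∈ Finset.range J, dist (β (pr (((j : ℝ) + 1) / J))) (β (pr ((j : ℝ) / J)))

/-- The law of `U_J`: the mixture `Σ_j (|β(j/J) − β((j−1)/J)| / L_{τ_J}(β)) · Unif[(j−1)/J, j/J]`. -/
def mixLaw {d : ℕ} (β : C(unitInterval, Euc d)) (J : ℕ) : Measure ℝ :=
  ∑ j ∈ Finset.range J,
    ENNReal.ofReal (dist (β (pr (((j : ℝ) + 1) / J))) (β (pr ((j : ℝ) / J))) / chordal β J) •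
      ((J : ℝ≥0∞) • volume.restrict (Set.Icc ((j : ℝ) / J) (((j : ℝ) + 1) / J)))

namespace S24

variable {d : ℕ} (β : C(unitInterval, Euc d))

lemma pr_coe (t : unitInterval) : pr (t : ℝ) = t := by
  rw [pr, Set.projIcc_of_mem zero_le_one t.2]

lemma pr_mono : Monotone pr := Set.monotone_projIcc zero_le_one

lemma grid_mem {J j : ℕ} (hj : j ≤ J) : (j : ℝ)/J ∈ Set.Icc (0:ℝ) 1 := by
  rcases Nat.eq_zero_or_pos J with h | h
  · subst h; simp
  · constructor
    · positivity
    · rw [div_le_one (by exact_mod_cast h)]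
      exact_mod_cast hj

lemma pr_grid {J j : ℕ} (hj : j ≤ J) : ((pr ((j:ℝ)/J) : ℝ)) = (j:ℝ)/J := by
  rw [pr, Set.projIcc_of_mem zero_le_one (grid_mem hj)]

lemma grid_real_mono (J : ℕ) : Monotone (fun i : ℕ => (i:ℝ)/(J:ℝ)) := fun i j hij => by
  dsimp only
  have : (i:ℝ) ≤ (j:ℝ) := by exact_mod_cast hij
  gcongr

lemma tg_mono (J : ℕ) : Monotone (fun i : ℕ => pr ((i:ℝ)/(J:ℝ))) :=
  pr_mono.comp (grid_real_mono J)

lemma cast_succ_div (J j : ℕ) : ((j:ℝ)+1)/J = ((j+1 : ℕ):ℝ)/J := by push_cast; ring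

lemma chordal_eq (J : ℕ) :
    chordal β J = ∑ j ∈ Finset.range J, dist (β (pr (((j+1:ℕ):ℝ) / J))) (β (pr ((j : ℝ) / J))) := by
  unfold chordal
  refine Finset.sum_congr rfl fun j _ => by rw [cast_succ_div]

lemma chordal_nonneg (J : ℕ) : 0 ≤ chordal β J :=
  Finset.sum_nonneg fun _ _ => dist_nonneg

lemma chordal_le (hL' : curveLength β < ⊤) (J : ℕ) :
    chordal β J ≤ (curveLength β).toReal := by
  have h := eVariationOn.sum_le (f := β) (s := Set.univ) (n := J)
      (u := fun i => pr ((i:ℝ)/J))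
      (tg_mono J) (fun i => Set.mem_univ _)
  rw [chordal_eq]
  have := ENNReal.toReal_mono hL'.ne h
  rw [ENNReal.toReal_sum (fun a _ => edist_ne_top _ _)] at this
  refine le_trans (le_of_eq ?_) this
  refine Finset.sum_congr rfl fun j _ => ?_
  rw [dist_edist]


lemma chain {J : ℕ} : ∀ {a b : ℕ}, a ≤ b →
    dist (β (pr ((b:ℝ)/J))) (β (pr ((a:ℝ)/J))) ≤
      ∑ j ∈ Finset.Ico a b, dist (β (pr (((j+1:ℕ):ℝ)/J))) (β (pr ((j:ℝ)/J))) := by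
  intro a b hab
  induction b, hab using Nat.le_induction with
  | base => simp
  | succ b hab ih =>
    have h1 : dist (β (pr (((b+1:ℕ):ℝ)/J))) (β (pr ((a:ℝ)/J))) ≤
        dist (β (pr (((b+1:ℕ):ℝ)/J))) (β (pr ((b:ℝ)/J))) +
        dist (β (pr ((b:ℝ)/J))) (β (pr ((a:ℝ)/J))) := dist_triangle _ _ _
    rw [Finset.sum_Ico_succ_top hab]
    linarith

lemma subchain_Ico {J n : ℕ} {k : ℕ → ℕ} (hk : Monotone k) :
    ∑ i ∈ Finset.range n, dist (β (pr (((k (i+1)):ℝ)/J))) (β (pr (((k i):ℝ)/J))) ≤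
      ∑ j ∈ Finset.Ico (k 0) (k n), dist (β (pr (((j+1:ℕ):ℝ)/J))) (β (pr ((j:ℝ)/J))) := by
  induction n with
  | zero => simp
  | succ n ih =>
    rw [Finset.sum_range_succ, ← Finset.sum_Ico_consecutive _ (hk (Nat.zero_le n))
      (hk (Nat.le_succ n))]
    exact add_le_add ih (chain β (hk (Nat.le_succ n)))

lemma subchain {J n : ℕ} {k : ℕ → ℕ} (hk : Monotone k) (hkJ : k n ≤ J) :
    ∑ i ∈ Finset.range n, dist (β (pr (((k (i+1)):ℝ)/J))) (β (pr (((k i):ℝ)/J))) ≤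
      chordal β J := by
  refine le_trans (subchain_Ico β hk) ?_
  rw [chordal_eq]
  refine Finset.sum_le_sum_of_subset_of_nonneg ?_ (fun _ _ _ => dist_nonneg)
  intro j hj
  simp only [Finset.mem_Ico, Finset.mem_range] at *
  exact lt_of_lt_of_le hj.2 hkJ

lemma tendsto_chordal (hL : 0 < curveLength β) (hL' : curveLength β < ⊤) :
    Tendsto (fun J => chordal β J) atTop (nhds (curveLength β).toReal) := by
  set Lr := (curveLength β).toReal with hLrdef
  rw [Metric.tendsto_atTop]
  intro ε hε
  -- find a good partition
  have hsub : curveLength β - ENNReal.ofReal (ε/4) < curveLength β :=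
    ENNReal.sub_lt_self hL'.ne hL.ne' (by simp [hε.le]; positivity)
  rw [curveLength, eVariationOn, lt_iSup_iff] at hsub
  obtain ⟨⟨n, u, hu, hmem⟩, hlt⟩ := hsub
  set S := ∑ i ∈ Finset.range n, dist (β (u (i+1))) (β (u i)) with hSdef
  have hSedist : ∑ i ∈ Finset.range n, edist (β (u (i+1))) (β (u i)) ≤ curveLength β :=
    eVariationOn.sum_le (f := β) (n := n) hu (fun _ => Set.mem_univ _)
  have hS : Lr - ε/4 ≤ S := by
    have h2 : curveLength β ≤ (∑ i ∈ Finset.range n, edist (β (u (i+1))) (β (u i)))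
        + ENNReal.ofReal (ε/4) := tsub_le_iff_right.mp hlt.le
    have h3 := ENNReal.toReal_mono (by
        exact ENNReal.add_ne_top.mpr ⟨(lt_of_le_of_lt hSedist hL').ne, ENNReal.ofReal_ne_top⟩) h2
    rw [ENNReal.toReal_add (lt_of_le_of_lt hSedist hL').ne ENNReal.ofReal_ne_top,
      ENNReal.toReal_ofReal (by positivity : (0:ℝ) ≤ ε/4), ENNReal.toReal_sum
        (fun a _ => edist_ne_top _ _)] at h3
    have h4 : ∑ i ∈ Finset.range n, (edist (β (u (i+1))) (β (u i))).toReal = S := by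
      refine Finset.sum_congr rfl fun j _ => (dist_edist _ _).symm
    rw [h4] at h3
    linarith
  -- uniform continuity
  have hβu : UniformContinuous β := CompactSpace.uniformContinuous_of_continuous β.continuous
  have hεn : (0:ℝ) < ε/(4*(n+1)) := by positivity
  obtain ⟨δ, hδ, hδ'⟩ := Metric.uniformContinuous_iff.mp hβu _ hεn
  obtain ⟨N₀, hN₀⟩ := exists_nat_gt (1/δ)
  refine ⟨max 1 N₀, fun J hJ => ?_⟩
  have hJ1 : 1 ≤ J := le_trans (le_max_left _ _) hJ
  have hJR : (0:ℝ) < J := by exact_mod_cast hJ1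
  have hJδ : 1/(J:ℝ) < δ := by
    rw [div_lt_iff₀ hJR]
    have : 1/δ < (J:ℝ) := lt_of_lt_of_le hN₀ (by exact_mod_cast le_trans (le_max_right _ _) hJ)
    rw [div_lt_iff₀ hδ] at this
    linarith [mul_comm δ (J:ℝ)]
  -- rounded grid points
  set k : ℕ → ℕ := fun i => ⌊(u i : ℝ) * J⌋₊ with hkdef
  have hkmono : Monotone k := fun i j hij =>
    Nat.floor_mono (mul_le_mul_of_nonneg_right (by exact_mod_cast hu hij) hJR.le)
  have hkJ : ∀ i, k i ≤ J := fun i => by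
    have : (u i : ℝ) * J ≤ (J:ℝ) := by
      have := (u i).2.2
      nlinarith
    calc k i ≤ ⌊(J:ℝ)⌋₊ := Nat.floor_mono this
    _ = J := Nat.floor_natCast J
  have hknear : ∀ i, dist (pr (((k i):ℝ)/J)) (u i) < δ := fun i => by
    have h0 : (0:ℝ) ≤ (u i : ℝ) * J := mul_nonneg (u i).2.1 hJR.le
    have hfl : ((k i):ℝ) ≤ (u i : ℝ) * J := Nat.floor_le h0
    have hfu : (u i : ℝ) * J < (k i : ℝ) + 1 := Nat.lt_floor_add_one _
    have hc : ((pr (((k i):ℝ)/J) : ℝ)) = ((k i):ℝ)/J := pr_grid (hkJ i)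
    rw [Subtype.dist_eq, hc, Real.dist_eq, abs_sub_lt_iff]
    constructor
    · have h5 : ((k i):ℝ)/J ≤ (u i : ℝ) := by
        rw [div_le_iff₀ hJR]; linarith
      linarith
    · have h5 : (u i : ℝ) < (((k i):ℝ) + 1)/J := by
        rw [lt_div_iff₀ hJR]; linarith
      have h6 : (((k i):ℝ) + 1)/J = ((k i):ℝ)/J + 1/J := by ring
      linarith
  have hclose : ∀ i, dist (β (pr (((k i):ℝ)/J))) (β (u i)) < ε/(4*(n+1)) :=
    fun i => hδ' (hknear i)
  have hchain := subchain β hkmono (hkJ n)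
  have hterm : ∀ i ∈ Finset.range n, dist (β (u (i+1))) (β (u i)) ≤
      dist (β (pr (((k (i+1)):ℝ)/J))) (β (pr (((k i):ℝ)/J))) + 2 * (ε/(4*(n+1))) := by
    intro i _
    have t1 := hclose i
    have t2 := hclose (i+1)
    linarith [dist_triangle4 (β (u (i+1))) (β (pr (((k (i+1)):ℝ)/J)))
        (β (pr (((k i):ℝ)/J))) (β (u i)),
      dist_comm (β (pr (((k (i+1)):ℝ)/J))) (β (u (i+1))),
      dist_comm (β (pr (((k i):ℝ)/J))) (β (u i))]
  have hcomp : S ≤ (∑ i ∈ Finset.range n,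
      dist (β (pr (((k (i+1)):ℝ)/J))) (β (pr (((k i):ℝ)/J)))) + n * (2 * (ε/(4*(n+1)))) := by
    rw [hSdef]
    calc ∑ i ∈ Finset.range n, dist (β (u (i+1))) (β (u i))
        ≤ ∑ i ∈ Finset.range n, (dist (β (pr (((k (i+1)):ℝ)/J))) (β (pr (((k i):ℝ)/J)))
          + 2 * (ε/(4*(n+1)))) := Finset.sum_le_sum hterm
      _ = _ := by rw [Finset.sum_add_distrib, Finset.sum_const, Finset.card_range,
          nsmul_eq_mul]
  have hhalf : (n:ℝ) * (2 * (ε/(4*(n+1)))) ≤ ε/2 := by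
    have hn1 : (0:ℝ) < (n:ℝ) + 1 := by positivity
    rw [show (n:ℝ) * (2 * (ε/(4*((n:ℝ)+1)))) = ε * ((n:ℝ)/(2*((n:ℝ)+1))) by field_simp; ring]
    have h7 : (n:ℝ)/(2*((n:ℝ)+1)) ≤ 1/2 := by
      rw [div_le_iff₀ (by positivity)]; linarith
    nlinarith
  have hub := chordal_le β hL' J
  rw [Real.dist_eq, abs_sub_lt_iff]
  constructor <;> [linarith; linarith]

lemma Icc_zero_one_eq_univ : Set.Icc (0:unitInterval) 1 = Set.univ := by
  ext t
  simp only [Set.mem_Icc, Set.mem_univ, iff_true]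
  exact ⟨unitInterval.nonneg', unitInterval.le_one'⟩

lemma lengthTo_zero : lengthTo β 0 = 0 :=
  eVariationOn.subsingleton β (by rw [Set.Icc_self]; exact Set.subsingleton_singleton)

lemma lengthTo_one : lengthTo β 1 = curveLength β := by
  rw [lengthTo, Icc_zero_one_eq_univ, curveLength]

lemma lengthTo_le (t : unitInterval) : lengthTo β t ≤ curveLength β :=
  eVariationOn.mono β (Set.subset_univ _)

lemma lengthTo_mono : Monotone (lengthTo β) := fun _ _ h =>
  eVariationOn.mono β (Set.Icc_subset_Icc_right h)

lemma lengthTo_add {t t' : unitInterval} (h : t ≤ t') :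
    lengthTo β t + eVariationOn β (Set.Icc t t') = lengthTo β t' := by
  have := eVariationOn.Icc_add_Icc β (s := Set.univ) unitInterval.nonneg' h (Set.mem_univ t)
  simpa only [Set.univ_inter, lengthTo] using this

lemma sFrac_mono : Monotone (sFrac β) := fun _ _ h =>
  ENNReal.div_le_div_right (lengthTo_mono β h) _

lemma sFrac_ne_top (hL : 0 < curveLength β) (hL' : curveLength β < ⊤) (t : unitInterval) :
    sFrac β t ≠ ⊤ :=
  (ENNReal.div_lt_top (lt_of_le_of_lt (lengthTo_le β t) hL').ne hL.ne').ne

lemma sFrac_one (hL : 0 < curveLength β) (hL' : curveLength β < ⊤) : sFrac β 1 = 1 := by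
  rw [sFrac, lengthTo_one, ENNReal.div_self hL.ne' hL'.ne]

lemma qSet_bddBelow (u : ℝ) :
    BddBelow {x : ℝ | ∃ t : unitInterval, (t : ℝ) = x ∧ ENNReal.ofReal u ≤ sFrac β t} :=
  ⟨0, fun x hx => by obtain ⟨t, ht, -⟩ := hx; exact ht ▸ t.2.1⟩

lemma qPoint_le {u : ℝ} {t' : unitInterval} (h : ENNReal.ofReal u ≤ sFrac β t') :
    qPoint β u ≤ t' := by
  rw [qPoint]
  calc pr (sInf _) ≤ pr (t' : ℝ) := pr_mono (csInf_le (qSet_bddBelow β u) ⟨t', rfl, h⟩)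
    _ = t' := pr_coe t'

lemma le_qPoint {u : ℝ} {t t' : unitInterval} (hne : ENNReal.ofReal u ≤ sFrac β t')
    (hlt : sFrac β t < ENNReal.ofReal u) : t ≤ qPoint β u := by
  rw [qPoint]
  have hlb : ∀ x ∈ {x : ℝ | ∃ s : unitInterval, (s : ℝ) = x ∧ ENNReal.ofReal u ≤ sFrac β s},
      (t:ℝ) ≤ x := by
    rintro x ⟨t₂, rfl, h₂⟩
    by_contra hcon
    push_neg at hcon
    have ht₂t : t₂ ≤ t := le_of_lt (Subtype.coe_lt_coe.mp hcon)
    exact absurd (le_trans h₂ (sFrac_mono β ht₂t)) (not_le.mpr hlt)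
  have hle : (t:ℝ) ≤ sInf {x : ℝ | ∃ s : unitInterval, (s : ℝ) = x ∧
      ENNReal.ofReal u ≤ sFrac β s} := le_csInf ⟨t', t', rfl, hne⟩ hlb
  calc t = pr (t:ℝ) := (pr_coe t).symm
    _ ≤ pr _ := pr_mono hle

lemma qPoint_monotoneOn (hL : 0 < curveLength β) (hL' : curveLength β < ⊤) :
    MonotoneOn (qPoint β) (Set.Iic (1:ℝ)) := by
  intro u _ v hv huv
  apply pr_mono
  refine csInf_le_csInf (qSet_bddBelow β u) ⟨(1:unitInterval), (1:unitInterval), rfl, ?_⟩ ?_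
  · rw [sFrac_one β hL hL']
    exact ENNReal.ofReal_le_one.mpr hv
  · rintro x ⟨t, rfl, h⟩
    exact ⟨t, rfl, le_trans (ENNReal.ofReal_le_ofReal huv) h⟩

lemma dist_between {a b t s : unitInterval} (h1 : a ≤ t) (h2 : t ≤ b) (h3 : a ≤ s)
    (h4 : s ≤ b) : dist t s ≤ (b:ℝ) - (a:ℝ) := by
  have c1 : (a:ℝ) ≤ (t:ℝ) := h1
  have c2 : (t:ℝ) ≤ (b:ℝ) := h2
  have c3 : (a:ℝ) ≤ (s:ℝ) := h3
  have c4 : (s:ℝ) ≤ (b:ℝ) := h4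
  rw [Subtype.dist_eq, Real.dist_eq, abs_sub_le_iff]
  constructor <;> linarith

end S24

/-- Lemma S2.4 of the paper: for a rectifiable path `β` of positive length, the chordal
lengths along uniform partitions are eventually positive, and `β(U_J)` converges in
distribution to the arc-length measure of `β`: for every bounded continuous `f`,
`E[f(β(U_J))] → ∫₀¹ f(β(q_β(t))) dt`. -/
theorem mixture_tendsto_arcLength_measure
    (d : ℕ) (hd : 1 ≤ d) (β : C(unitInterval, Euc d))
    (hL : 0 < curveLength β) (hL' : curveLength β < ⊤) :
    (∀ᶠ J in atTop, 0 < chordal β J) ∧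
    ∀ f : Euc d →ᵇ ℝ,
      Tendsto (fun J : ℕ => ∫ x, f (β (pr x)) ∂(mixLaw β J)) atTop
        (nhds (∫ t in Set.Icc (0:ℝ) 1, f (β (qPoint β t)))) := by
  classical
  have hLr : 0 < (curveLength β).toReal := ENNReal.toReal_pos hL.ne' hL'.ne
  set Lr := (curveLength β).toReal with hLrdef
  have hten := S24.tendsto_chordal β hL hL'
  have hev : ∀ᶠ J in atTop, 0 < chordal β J := hten.eventually (eventually_gt_nhds hLr)
  refine ⟨hev, fun f => ?_⟩
  set M := ‖f‖ with hMdef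
  have hM0 : (0:ℝ) ≤ M := norm_nonneg f
  have hM : ∀ x, |f x| ≤ M := fun x => f.norm_coe_le_norm x
  set g : ℝ → ℝ := fun x => f (β (pr x)) with hgdef
  have hgc : Continuous g := f.continuous.comp (β.continuous.comp (continuous_projIcc (h := zero_le_one)))
  set h : ℝ → ℝ := fun u => f (β (qPoint β u)) with hhdef
  -- integrability of h on [0,1]
  have hq1 : Monotone (fun u : ℝ => qPoint β (min u 1)) := fun u v huv =>
    S24.qPoint_monotoneOn β hL hL' (min_le_right u 1) (min_le_right v 1)
      (min_le_min huv le_rfl)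
  have hmeas1 : Measurable (fun u : ℝ => f (β (qPoint β (min u 1)))) :=
    (f.continuous.comp β.continuous).measurable.comp hq1.measurable
  haveI hfin : IsFiniteMeasure (volume.restrict (Set.Icc (0:ℝ) 1)) := by
    constructor
    rw [Measure.restrict_apply_univ]
    simp [Real.volume_Icc]
  have hint1 : IntegrableOn (fun u : ℝ => f (β (qPoint β (min u 1)))) (Set.Icc (0:ℝ) 1) := by
    refine Integrable.mono' (integrable_const M) hmeas1.aestronglyMeasurable ?_
    exact Eventually.of_forall fun u => by simpa [Real.norm_eq_abs] using hM _
  have hinth : IntegrableOn h (Set.Icc (0:ℝ) 1) := by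
    refine hint1.congr_fun (fun u hu => ?_) measurableSet_Icc
    simp only [hhdef, min_eq_left hu.2]
  rw [Metric.tendsto_nhds]
  intro ε₀ hε₀
  have hfb : UniformContinuous (fun t : unitInterval => f (β t)) :=
    CompactSpace.uniformContinuous_of_continuous (f.continuous.comp β.continuous)
  obtain ⟨δ, hδpos, hδ⟩ := Metric.uniformContinuous_iff.mp hfb (ε₀/4) (by positivity)
  set η := min (ε₀ * Lr / (8*(M+1))) (Lr/2) with hηdef
  have hηpos : 0 < η := lt_min (by positivity) (by positivity)
  have hη1 : η ≤ ε₀ * Lr / (8*(M+1)) := min_le_left _ _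
  have hη2 : η ≤ Lr/2 := min_le_right _ _
  have hδev : ∀ᶠ J : ℕ in atTop, (1:ℝ)/J < δ :=
    tendsto_one_div_atTop_nhds_zero_nat.eventually (eventually_lt_nhds hδpos)
  have hLev : ∀ᶠ J : ℕ in atTop, Lr - η < chordal β J :=
    hten.eventually (eventually_gt_nhds (by linarith))
  filter_upwards [eventually_ge_atTop 1, hδev, hLev] with J hJ1 hJδ hLJ
  have hJR : (0:ℝ) < J := by exact_mod_cast hJ1
  have hJne : (J:ℝ) ≠ 0 := hJR.ne'
  have hchle : chordal β J ≤ Lr := S24.chordal_le β hL' J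
  have hLJpos : 0 < chordal β J := by linarith
  set D : ℕ → ℝ := fun j => dist (β (pr (((j:ℝ)+1)/(J:ℝ)))) (β (pr ((j:ℝ)/(J:ℝ)))) with hDdef
  set F : ℕ → ℝ := fun j => f (β (pr ((j:ℝ)/(J:ℝ)))) with hFdef
  set A : ℕ → ℝ := fun j => ∫ x in Set.Icc ((j:ℝ)/J) (((j:ℝ)+1)/J), g x with hAdef
  set sR : ℕ → ℝ := fun j => (sFrac β (pr ((j:ℝ)/(J:ℝ)))).toReal with hsRdef
  set V : ℕ → ℝ≥0∞ := fun j =>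
    eVariationOn β (Set.Icc (pr ((j:ℝ)/(J:ℝ))) (pr (((j+1:ℕ):ℝ)/(J:ℝ)))) with hVdef
  have htg : ∀ j : ℕ, pr (((j:ℝ)+1)/(J:ℝ)) = pr (((j+1:ℕ):ℝ)/(J:ℝ)) := fun j => by
    rw [S24.cast_succ_div]
  have hchordal : chordal β J = ∑ j ∈ Finset.range J, D j := rfl
  have hw0 : ∀ j, 0 ≤ D j / chordal β J := fun j => div_nonneg dist_nonneg hLJpos.le
  -- Step A : value of the mixture integral
  have hintg : ∀ j ∈ Finset.range J, Integrable g
      (ENNReal.ofReal (D j / chordal β J) •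
        ((J:ℝ≥0∞) • volume.restrict (Set.Icc ((j:ℝ)/J) (((j:ℝ)+1)/J)))) :=
    fun j _ => ((hgc.integrableOn_Icc).smul_measure
      (ENNReal.natCast_ne_top J)).smul_measure ENNReal.ofReal_ne_top
  have hEJ : (∫ x, g x ∂(mixLaw β J)) =
      ∑ j ∈ Finset.range J, (D j / chordal β J) * ((J:ℝ) * A j) := by
    rw [mixLaw, integral_finset_sum_measure hintg]
    refine Finset.sum_congr rfl fun j hj => ?_
    rw [integral_smul_measure, integral_smul_measure, ENNReal.toReal_ofReal (hw0 j),
      ENNReal.toReal_natCast, smul_eq_mul, smul_eq_mul]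
  -- Step B : sample-average bound on each mixture cell
  have hBj : ∀ j ∈ Finset.range J, |(J:ℝ) * A j - F j| ≤ ε₀/4 := by
    intro j hj
    have hj1J : j + 1 ≤ J := Finset.mem_range.mp hj
    have hjJ : j ≤ J := Nat.le_of_succ_le hj1J
    have hle : (j:ℝ)/J ≤ ((j:ℝ)+1)/J := by
      have hc : (j:ℝ) ≤ (j:ℝ)+1 := by linarith
      gcongr
    have hcl : ((pr ((j:ℝ)/(J:ℝ)) : ℝ)) = (j:ℝ)/J := S24.pr_grid hjJ
    have hcr : ((pr (((j:ℝ)+1)/(J:ℝ)) : ℝ)) = ((j:ℝ)+1)/J := by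
      rw [htg j, S24.pr_grid hj1J]; push_cast; ring
    have hgap : ((j:ℝ)+1)/J - (j:ℝ)/J = 1/J := by ring
    have hle' : pr ((j:ℝ)/(J:ℝ)) ≤ pr (((j:ℝ)+1)/(J:ℝ)) := S24.pr_mono hle
    have hbound : ∀ x ∈ Set.uIoc ((j:ℝ)/J) (((j:ℝ)+1)/J), ‖g x - F j‖ ≤ ε₀/4 := by
      intro x hx
      rw [Set.uIoc_of_le hle] at hx
      have h1 : pr ((j:ℝ)/J) ≤ pr x := S24.pr_mono hx.1.le
      have h2 : pr x ≤ pr (((j:ℝ)+1)/J) := S24.pr_mono hx.2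
      have hdist : dist (pr x) (pr ((j:ℝ)/J)) ≤ 1/(J:ℝ) := by
        have hb := S24.dist_between h1 h2 le_rfl hle'
        rw [hcr, hcl, hgap] at hb
        exact hb
      have hdd : dist (f (β (pr x))) (f (β (pr ((j:ℝ)/J)))) < ε₀/4 :=
        hδ (lt_of_le_of_lt hdist hJδ)
      have : ‖g x - F j‖ = dist (f (β (pr x))) (f (β (pr ((j:ℝ)/J)))) := by
        simp only [hgdef, hFdef, Real.norm_eq_abs, Real.dist_eq]
      rw [this]; linarith
    have hgint : IntervalIntegrable g volume ((j:ℝ)/J) (((j:ℝ)+1)/J) :=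
      hgc.intervalIntegrable _ _
    have hAj : A j = ∫ x in ((j:ℝ)/J)..(((j:ℝ)+1)/J), g x := by
      rw [intervalIntegral.integral_of_le hle, ← integral_Icc_eq_integral_Ioc]
    have hsub : (∫ x in ((j:ℝ)/J)..(((j:ℝ)+1)/J), (g x - F j)) = A j - (1/J) * F j := by
      rw [intervalIntegral.integral_sub hgint (intervalIntegrable_const),
        intervalIntegral.integral_const, hAj, smul_eq_mul, hgap]
    have hnorm := intervalIntegral.norm_integral_le_of_norm_le_const hbound
    rw [hsub, Real.norm_eq_abs, hgap, abs_of_nonneg (by positivity : (0:ℝ) ≤ 1/(J:ℝ))]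
      at hnorm
    have heq : (J:ℝ) * A j - F j = (J:ℝ) * (A j - (1/J) * F j) := by field_simp
    rw [heq, abs_mul, abs_of_nonneg hJR.le]
    calc (J:ℝ) * |A j - 1/J * F j| ≤ (J:ℝ) * (ε₀/4 * (1/J)) :=
          mul_le_mul_of_nonneg_left hnorm hJR.le
      _ = ε₀/4 := by field_simp
  -- basic facts about sR
  have hsRmono : ∀ {a b : ℕ}, a ≤ b → sR a ≤ sR b := fun {a b} hab =>
    ENNReal.toReal_mono (S24.sFrac_ne_top β hL hL' _) (S24.sFrac_mono β (S24.tg_mono J hab))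
  have hsR0 : sR 0 = 0 := by
    have h0 : pr (((0:ℕ):ℝ)/(J:ℝ)) = (0 : unitInterval) :=
      Subtype.ext (by rw [S24.pr_grid (Nat.zero_le J)]; simp)
    simp only [hsRdef, h0, sFrac, S24.lengthTo_zero, ENNReal.zero_div, ENNReal.toReal_zero]
  have hsRJ : sR J = 1 := by
    have h1 : pr ((J:ℝ)/(J:ℝ)) = (1 : unitInterval) := by
      have e : (J:ℝ)/J = ((1 : unitInterval) : ℝ) := by rw [div_self hJne]; simp
      rw [e, S24.pr_coe]
    simp only [hsRdef, h1, S24.sFrac_one β hL hL', ENNReal.toReal_one]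
  have hVfin : ∀ j : ℕ, V j ≠ ⊤ := fun j =>
    (lt_of_le_of_lt (eVariationOn.mono β (Set.subset_univ _)) hL').ne
  have hlenfin : ∀ t : unitInterval, lengthTo β t ≠ ⊤ := fun t =>
    (lt_of_le_of_lt (S24.lengthTo_le β t) hL').ne
  have hvj : ∀ j ∈ Finset.range J, sR (j+1) - sR j = (V j).toReal / Lr := by
    intro j hj
    have hadd := S24.lengthTo_add β (S24.tg_mono J (Nat.le_succ j))
    have e1 : sR (j+1) = (lengthTo β (pr (((j+1:ℕ):ℝ)/(J:ℝ)))).toReal / Lr := by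
      simp only [hsRdef, sFrac, ENNReal.toReal_div, hLrdef]
    have e0 : sR j = (lengthTo β (pr ((j:ℝ)/(J:ℝ)))).toReal / Lr := by
      simp only [hsRdef, sFrac, ENNReal.toReal_div, hLrdef]
    have e2 : (lengthTo β (pr (((j+1:ℕ):ℝ)/(J:ℝ)))).toReal =
        (lengthTo β (pr ((j:ℝ)/(J:ℝ)))).toReal + (V j).toReal := by
      rw [← hadd, ENNReal.toReal_add (hlenfin _) (hVfin j)]
    rw [e1, e0, e2]; ring
  have hDV : ∀ j ∈ Finset.range J, D j ≤ (V j).toReal := by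
    intro j hj
    have htgle : pr ((j:ℝ)/(J:ℝ)) ≤ pr (((j+1:ℕ):ℝ)/(J:ℝ)) := S24.tg_mono J (Nat.le_succ j)
    have hmem1 : pr ((j:ℝ)/(J:ℝ)) ∈
        Set.Icc (pr ((j:ℝ)/(J:ℝ))) (pr (((j+1:ℕ):ℝ)/(J:ℝ))) := Set.left_mem_Icc.mpr htgle
    have hmem2 : pr (((j+1:ℕ):ℝ)/(J:ℝ)) ∈
        Set.Icc (pr ((j:ℝ)/(J:ℝ))) (pr (((j+1:ℕ):ℝ)/(J:ℝ))) := Set.right_mem_Icc.mpr htgle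
    have hed := eVariationOn.edist_le β hmem2 hmem1
    have hD' : D j = (edist (β (pr (((j+1:ℕ):ℝ)/(J:ℝ)))) (β (pr ((j:ℝ)/(J:ℝ))))).toReal := by
      simp only [hDdef]
      rw [htg j, dist_edist]
    rw [hD']
    exact ENNReal.toReal_mono (hVfin j) hed
  -- Step C : decomposition of the limit integral
  have hii : ∀ k, k < J → IntervalIntegrable h volume (sR k) (sR (k+1)) := by
    intro k hk
    refine (hinth.mono_set ?_).intervalIntegrable
    rw [Set.uIcc_of_le (hsRmono (Nat.le_succ k))]
    intro x hx
    constructor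
    · exact le_trans (by rw [← hsR0]; exact hsRmono (Nat.zero_le k)) hx.1
    · exact le_trans hx.2 (by rw [← hsRJ]; exact hsRmono hk)
  have hTsum : (∫ t in Set.Icc (0:ℝ) 1, h t) =
      ∑ k ∈ Finset.range J, ∫ t in (sR k)..(sR (k+1)), h t := by
    rw [intervalIntegral.sum_integral_adjacent_intervals hii, hsR0, hsRJ,
      intervalIntegral.integral_of_le zero_le_one, integral_Icc_eq_integral_Ioc]
  -- Step D : per-interval bound on the limit side
  have hTj : ∀ j ∈ Finset.range J,
      |(∫ t in (sR j)..(sR (j+1)), h t) - (sR (j+1) - sR j) * F j| ≤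
        ε₀/4 * (sR (j+1) - sR j) := by
    intro j hj
    have hjJ' : j < J := Finset.mem_range.mp hj
    have hj1J : j + 1 ≤ J := hjJ'
    have hjJ : j ≤ J := Nat.le_of_succ_le hj1J
    have hle' : sR j ≤ sR (j+1) := hsRmono (Nat.le_succ j)
    have hne : ENNReal.ofReal (sR (j+1)) = sFrac β (pr (((j+1:ℕ):ℝ)/(J:ℝ))) := by
      simp only [hsRdef]
      exact ENNReal.ofReal_toReal (S24.sFrac_ne_top β hL hL' _)
    have hbound : ∀ u ∈ Set.uIoc (sR j) (sR (j+1)), ‖h u - F j‖ ≤ ε₀/4 := by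
      intro u hu
      rw [Set.uIoc_of_le hle'] at hu
      have hupper : qPoint β u ≤ pr (((j+1:ℕ):ℝ)/(J:ℝ)) := by
        refine S24.qPoint_le β ?_
        rw [← hne]
        exact ENNReal.ofReal_le_ofReal hu.2
      have hlower : pr ((j:ℝ)/(J:ℝ)) ≤ qPoint β u := by
        refine S24.le_qPoint β (t' := pr (((j+1:ℕ):ℝ)/(J:ℝ))) ?_ ?_
        · rw [← hne]
          exact ENNReal.ofReal_le_ofReal hu.2
        · have hsR0j : (0:ℝ) ≤ sR j := ENNReal.toReal_nonneg
          have h0u : 0 < u := lt_of_le_of_lt hsR0j hu.1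
          have hlt : ENNReal.ofReal (sR j) < ENNReal.ofReal u :=
            (ENNReal.ofReal_lt_ofReal_iff h0u).mpr hu.1
          rwa [hsRdef, ENNReal.ofReal_toReal (S24.sFrac_ne_top β hL hL' _)] at hlt
      have hdq : dist (qPoint β u) (pr ((j:ℝ)/(J:ℝ))) ≤ 1/(J:ℝ) := by
        have hb := S24.dist_between hlower hupper le_rfl (le_trans hlower hupper)
        rw [S24.pr_grid hj1J, S24.pr_grid hjJ] at hb
        refine le_trans hb (le_of_eq ?_)
        push_cast; ring
      have hdd : dist (f (β (qPoint β u))) (f (β (pr ((j:ℝ)/(J:ℝ))))) < ε₀/4 :=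
        hδ (lt_of_le_of_lt hdq hJδ)
      have : ‖h u - F j‖ = dist (f (β (qPoint β u))) (f (β (pr ((j:ℝ)/(J:ℝ))))) := by
        simp only [hhdef, hFdef, Real.norm_eq_abs, Real.dist_eq]
      rw [this]; linarith
    have hsub2 : (∫ u in (sR j)..(sR (j+1)), (h u - F j)) =
        (∫ u in (sR j)..(sR (j+1)), h u) - (sR (j+1) - sR j) * F j := by
      rw [intervalIntegral.integral_sub (hii j hjJ') intervalIntegrable_const,
        intervalIntegral.integral_const, smul_eq_mul]
    have hnorm := intervalIntegral.norm_integral_le_of_norm_le_const hbound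
    rw [hsub2, Real.norm_eq_abs, abs_of_nonneg (by linarith : (0:ℝ) ≤ sR (j+1) - sR j)]
      at hnorm
    exact hnorm
  -- Step E : sums
  have hSw : ∑ j ∈ Finset.range J, D j / chordal β J = 1 := by
    rw [← Finset.sum_div, ← hchordal, div_self hLJpos.ne']
  have hSv : ∑ j ∈ Finset.range J, (sR (j+1) - sR j) = 1 := by
    rw [Finset.sum_range_sub sR, hsRJ, hsR0, sub_zero]
  have hSdlr : ∑ j ∈ Finset.range J, D j / Lr = chordal β J / Lr := by
    rw [← Finset.sum_div, ← hchordal]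
  have e1 : |(∑ j ∈ Finset.range J, (D j / chordal β J) * ((J:ℝ) * A j)) -
      ∑ j ∈ Finset.range J, (D j / chordal β J) * F j| ≤ ε₀/4 := by
    rw [← Finset.sum_sub_distrib]
    refine le_trans (Finset.abs_sum_le_sum_abs _ _) ?_
    have hterm : ∀ j ∈ Finset.range J,
        |(D j / chordal β J) * ((J:ℝ) * A j) - (D j / chordal β J) * F j| ≤
          (D j / chordal β J) * (ε₀/4) := by
      intro j hj
      rw [← mul_sub, abs_mul, abs_of_nonneg (hw0 j)]
      exact mul_le_mul_of_nonneg_left (hBj j hj) (hw0 j)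
    calc ∑ j ∈ Finset.range J, |(D j / chordal β J) * ((J:ℝ) * A j) -
          (D j / chordal β J) * F j|
        ≤ ∑ j ∈ Finset.range J, (D j / chordal β J) * (ε₀/4) := Finset.sum_le_sum hterm
      _ = ε₀/4 := by rw [← Finset.sum_mul, hSw, one_mul]
  have e2 : |(∫ t in Set.Icc (0:ℝ) 1, h t) -
      ∑ j ∈ Finset.range J, (sR (j+1) - sR j) * F j| ≤ ε₀/4 := by
    rw [hTsum, ← Finset.sum_sub_distrib]
    refine le_trans (Finset.abs_sum_le_sum_abs _ _) ?_
    calc ∑ j ∈ Finset.range J, |(∫ t in (sR j)..(sR (j+1)), h t) - (sR (j+1) - sR j) * F j|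
        ≤ ∑ j ∈ Finset.range J, ε₀/4 * (sR (j+1) - sR j) := Finset.sum_le_sum hTj
      _ = ε₀/4 := by rw [← Finset.mul_sum, hSv, mul_one]
  have e3 : |(∑ j ∈ Finset.range J, (D j / chordal β J) * F j) -
      ∑ j ∈ Finset.range J, (sR (j+1) - sR j) * F j| ≤ ε₀/4 := by
    rw [← Finset.sum_sub_distrib]
    refine le_trans (Finset.abs_sum_le_sum_abs _ _) ?_
    have hterm : ∀ j ∈ Finset.range J,
        |(D j / chordal β J) * F j - (sR (j+1) - sR j) * F j| ≤
          ((D j / chordal β J - D j / Lr) + ((sR (j+1) - sR j) - D j / Lr)) * M := by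
      intro j hj
      have hwd : D j / Lr ≤ D j / chordal β J :=
        div_le_div_of_nonneg_left dist_nonneg hLJpos hchle
      have hvd : D j / Lr ≤ sR (j+1) - sR j := by
        rw [hvj j hj]
        exact div_le_div_of_nonneg_right (hDV j hj) hLr.le
      have habs : |D j / chordal β J - (sR (j+1) - sR j)| ≤
          (D j / chordal β J - D j / Lr) + ((sR (j+1) - sR j) - D j / Lr) :=
        abs_sub_le_iff.mpr ⟨by linarith, by linarith⟩
      rw [← sub_mul, abs_mul]
      refine mul_le_mul habs (hM _) (abs_nonneg _) ?_
      linarith [abs_nonneg (D j / chordal β J - (sR (j+1) - sR j))]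
    refine le_trans (Finset.sum_le_sum hterm) ?_
    rw [← Finset.sum_mul]
    have hsum : ∑ j ∈ Finset.range J, ((D j / chordal β J - D j / Lr) +
        ((sR (j+1) - sR j) - D j / Lr)) =
        (1 - chordal β J / Lr) + (1 - chordal β J / Lr) := by
      rw [Finset.sum_add_distrib, Finset.sum_sub_distrib, Finset.sum_sub_distrib,
        hSw, hSv, hSdlr]
    rw [hsum]
    have hc1 : 1 - chordal β J / Lr ≤ η / Lr := by
      rw [show (1:ℝ) - chordal β J / Lr = (Lr - chordal β J)/Lr by field_simp]
      exact div_le_div_of_nonneg_right (by linarith) hLr.le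
    have hk1 : η * (8*(M+1)) ≤ ε₀ * Lr := by
      have := (le_div_iff₀ (by positivity : (0:ℝ) < 8*(M+1))).mp hη1
      linarith
    have hk2 : (η/Lr + η/Lr) * M ≤ ε₀/4 := by
      rw [show (η/Lr + η/Lr) * M = (2*η*M)/Lr by ring, div_le_iff₀ hLr]
      nlinarith
    have hmono : ((1 - chordal β J / Lr) + (1 - chordal β J / Lr)) * M ≤
        (η/Lr + η/Lr) * M := by
      apply mul_le_mul_of_nonneg_right _ hM0
      linarith
    linarith
  -- final assembly
  rw [Real.dist_eq, hEJ]
  have t1 := abs_sub_le (∑ j ∈ Finset.range J, (D j / chordal β J) * ((J:ℝ) * A j))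
    (∑ j ∈ Finset.range J, (D j / chordal β J) * F j)
    (∫ t in Set.Icc (0:ℝ) 1, h t)
  have t2 := abs_sub_le (∑ j ∈ Finset.range J, (D j / chordal β J) * F j)
    (∑ j ∈ Finset.range J, (sR (j+1) - sR j) * F j)
    (∫ t in Set.Icc (0:ℝ) 1, h t)
  have e2'' : |(∑ j ∈ Finset.range J, (sR (j+1) - sR j) * F j) -
      ∫ t in Set.Icc (0:ℝ) 1, h t| ≤ ε₀/4 := by rw [abs_sub_comm]; exact e2
  refine lt_of_le_of_lt t1 ?_
  linarith [t2, e1, e3, e2'']
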